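/- Let G be a d×d real matrix whose spectral radius is strictly less than 1 and let Σ be a d×d symmetric positive definite matrix such that GΣ is symmetric. Then ∑_{l=0}^∞ G^l Σ (Gᵀ)^l = (I−G²)⁻¹Σ, and the matrices M = Σ⁻¹(I+G) and N = Σ⁻¹(I+G)G are both symmetric and satisfy: M − N = Σ⁻¹(I−G²), M is invertible with M⁻¹N = G, and M⁻¹(Mᵀ+N)M⁻ᵀ = Σ. Moreover for every g ∈ ℝ^d the vector β = Σ⁻¹(I+G)g satisfies M⁻¹β = g. -/

import Mathlib

open Matrix

section AuxAR1

open Filter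

attribute [local instance] Matrix.linftyOpNormedRing Matrix.linftyOpNormedAlgebra

private lemma ar1_aux_geom {d : ℕ} (A : Matrix (Fin d) (Fin d) ℝ)
    (hA : ∀ μ ∈ spectrum ℂ (A.map (algebraMap ℝ ℂ)), ‖μ‖ < 1) :
    HasSum (fun n : ℕ => A ^ n) ((1 - A)⁻¹) := by
  set f := algebraMap ℝ ℂ with hf
  set B := A.map f with hB
  have hBpow : ∀ n : ℕ, B ^ n = (A ^ n).map f := by
    intro n
    rw [hB, ← RingHom.mapMatrix_apply, ← map_pow, RingHom.mapMatrix_apply]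
  -- spectral radius < 1
  have hρ : spectralRadius ℂ B < 1 := by
    rcases subsingleton_or_nontrivial (Matrix (Fin d) (Fin d) ℂ) with h | h
    · rw [spectrum.SpectralRadius.of_subsingleton]; exact zero_lt_one
    · have := spectrum.spectralRadius_lt_of_forall_lt (a := B) (r := 1)
        (fun z hz => by have h := hA z hz; rw [← coe_nnnorm] at h; exact_mod_cast h)
      simpa using this
  obtain ⟨r, hρr, hr1⟩ := ENNReal.lt_iff_exists_nnreal_btwn.mp hρ
  have hr1' : (r : ℝ) < 1 := by exact_mod_cast hr1
  have hgel := spectrum.pow_nnnorm_pow_one_div_tendsto_nhds_spectralRadius B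
  have hev : ∀ᶠ n : ℕ in atTop, (‖B ^ n‖₊ : ENNReal) ^ (1 / (n : ℝ)) < r :=
    hgel.eventually_lt_const hρr
  have hbound : ∀ᶠ n : ℕ in atTop, ‖B ^ n‖ ≤ (r : ℝ) ^ n := by
    filter_upwards [hev, eventually_ge_atTop 1] with n h1 h2
    have hn : (n : ℝ) ≠ 0 := by positivity
    have key : (‖B ^ n‖₊ : ENNReal) ≤ (r : ENNReal) ^ n := by
      calc (‖B ^ n‖₊ : ENNReal) = ((‖B ^ n‖₊ : ENNReal) ^ (1 / (n : ℝ))) ^ (n : ℝ) := by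
            rw [← ENNReal.rpow_mul, one_div, inv_mul_cancel₀ hn, ENNReal.rpow_one]
        _ ≤ (r : ENNReal) ^ (n : ℝ) := ENNReal.rpow_le_rpow h1.le n.cast_nonneg
        _ = (r : ENNReal) ^ n := ENNReal.rpow_natCast _ _
    have : ‖B ^ n‖₊ ≤ r ^ n := by
      rw [← ENNReal.coe_pow] at key
      exact_mod_cast key
    calc ‖B ^ n‖ = (‖B ^ n‖₊ : ℝ) := rfl
      _ ≤ ((r ^ n : NNReal) : ℝ) := by exact_mod_cast this
      _ = (r : ℝ) ^ n := by push_cast; ring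
  have hsummable : Summable (fun n : ℕ => B ^ n) :=
    Summable.of_norm_bounded_eventually_nat
      (summable_geometric_of_lt_one r.coe_nonneg hr1') hbound
  obtain ⟨S, hS⟩ := hsummable
  have htend0 : Tendsto (fun n : ℕ => B ^ n) atTop (nhds 0) :=
    squeeze_zero_norm' hbound (tendsto_pow_atTop_nhds_zero_of_lt_one r.coe_nonneg hr1')
  -- partial sums telescoping
  have hpsumL : ∀ N : ℕ, ∑ n ∈ Finset.range N, ((1 : Matrix (Fin d) (Fin d) ℂ) - B) * B ^ n
      = 1 - B ^ N := by
    intro N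
    have : ∀ n : ℕ, ((1 : Matrix (Fin d) (Fin d) ℂ) - B) * B ^ n = B ^ n - B ^ (n + 1) := by
      intro n; rw [sub_mul, one_mul, pow_succ']
    simp_rw [this]
    rw [Finset.sum_range_sub' (fun n => B ^ n)]
    simp
  have hpsumR : ∀ N : ℕ, ∑ n ∈ Finset.range N, B ^ n * ((1 : Matrix (Fin d) (Fin d) ℂ) - B)
      = 1 - B ^ N := by
    intro N
    have : ∀ n : ℕ, B ^ n * ((1 : Matrix (Fin d) (Fin d) ℂ) - B) = B ^ n - B ^ (n + 1) := by
      intro n; rw [mul_sub, mul_one, pow_succ]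
    simp_rw [this]
    rw [Finset.sum_range_sub' (fun n => B ^ n)]
    simp
  have hTlim : Tendsto (fun N : ℕ => (1 : Matrix (Fin d) (Fin d) ℂ) - B ^ N) atTop (nhds 1) := by
    have := tendsto_const_nhds (x := (1 : Matrix (Fin d) (Fin d) ℂ)) (f := atTop (α := ℕ))
    simpa using this.sub htend0
  have hleft : ((1 : Matrix (Fin d) (Fin d) ℂ) - B) * S = 1 := by
    have h1 := (hS.mul_left (1 - B)).tendsto_sum_nat
    rw [show (fun N : ℕ => ∑ n ∈ Finset.range N, ((1 : Matrix (Fin d) (Fin d) ℂ) - B) * B ^ n)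
        = fun N => 1 - B ^ N from funext hpsumL] at h1
    exact tendsto_nhds_unique h1 hTlim
  have hright : S * ((1 : Matrix (Fin d) (Fin d) ℂ) - B) = 1 := by
    have h1 := (hS.mul_right (1 - B)).tendsto_sum_nat
    rw [show (fun N : ℕ => ∑ n ∈ Finset.range N, B ^ n * ((1 : Matrix (Fin d) (Fin d) ℂ) - B))
        = fun N => 1 - B ^ N from funext hpsumR] at h1
    exact tendsto_nhds_unique h1 hTlim
  -- transfer to ℝ
  have hmapL : ∀ (X : Matrix (Fin d) (Fin d) ℝ) (Y : Matrix (Fin d) (Fin d) ℂ),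
      ((X.map f) * Y).map Complex.re = X * (Y.map Complex.re) := by
    intro X Y
    ext i j
    simp [Matrix.mul_apply, Matrix.map_apply, Complex.re_sum, hf]
  have honemap : ((1 : Matrix (Fin d) (Fin d) ℝ) - A).map f = 1 - B := by
    ext i j
    by_cases h : i = j <;> simp [hB, Matrix.map_apply, Matrix.one_apply, h, hf]
  have hSre : (1 - A) * S.map Complex.re = 1 := by
    have h3 := congrArg (fun X => X.map Complex.re) hleft
    rw [← honemap, hmapL] at h3
    rw [h3]
    ext i j
    by_cases h : i = j <;> simp [Matrix.map_apply, Matrix.one_apply, h]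
  have hinv : (1 - A)⁻¹ = S.map Complex.re := Matrix.inv_eq_right_inv hSre
  rw [hinv]
  refine Pi.hasSum.mpr fun i => Pi.hasSum.mpr fun j => ?_
  have h1 : HasSum (fun n : ℕ => (B ^ n) i j) (S i j) :=
    Pi.hasSum.mp (Pi.hasSum.mp hS i) j
  have h2 := Complex.reCLM.hasSum h1
  simpa [hBpow, Matrix.map_apply, hf] using h2


end AuxAR1

private lemma ar1_aux_det {d : ℕ} (G : Matrix (Fin d) (Fin d) ℝ)
    (hG : ∀ μ ∈ spectrum ℂ (G.map (algebraMap ℝ ℂ)), ‖μ‖ < 1)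
    (t : ℝ) (ht : 1 ≤ |t|) :
    (t • (1 : Matrix (Fin d) (Fin d) ℝ) - G).det ≠ 0 := by
  intro h0
  set f := algebraMap ℝ ℂ with hf
  have hdetC : ((t • (1 : Matrix (Fin d) (Fin d) ℝ) - G).map f).det = 0 := by
    rw [← RingHom.mapMatrix_apply, ← RingHom.map_det, h0, map_zero]
  have hmem : (t : ℂ) ∈ spectrum ℂ (G.map f) := by
    rw [spectrum.mem_iff]
    intro hu
    rw [Matrix.isUnit_iff_isUnit_det] at hu
    have hmm : algebraMap ℂ (Matrix (Fin d) (Fin d) ℂ) (t : ℂ) - G.map f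
        = (t • (1 : Matrix (Fin d) (Fin d) ℝ) - G).map f := by
      ext i j
      by_cases h : i = j <;>
        simp [Matrix.map_apply, Matrix.algebraMap_matrix_apply, Matrix.one_apply, h, hf]
    rw [hmm, hdetC] at hu
    simp at hu
  have h1 := hG _ hmem
  rw [Complex.norm_real] at h1
  rw [Real.norm_eq_abs] at h1
  linarith

/-- If `G` has spectral radius `< 1` and `Sg` is symmetric positive
definite with `G * Sg` symmetric, then `∑ₗ Gˡ Sg (Gᵀ)ˡ = (I - G²)⁻¹ Sg`, and the matrices
`M = Sg⁻¹ (I + G)` and `N = Sg⁻¹ (I + G) G` are both symmetric and satisfy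
`M - N = Sg⁻¹ (I - G²)`, `M` invertible, `M⁻¹ N = G`, `M⁻¹ (Mᵀ + N) M⁻ᵀ = Sg`;
moreover for every `g`, the vector `β = Sg⁻¹ (I + G) g` satisfies `M⁻¹ β = g`. -/
theorem ar1_symmetric_matrix_splitting
    {d : ℕ} (G Sg : Matrix (Fin d) (Fin d) ℝ)
    (hG : ∀ μ ∈ spectrum ℂ (G.map (algebraMap ℝ ℂ)), ‖μ‖ < 1)
    (hSg : Sg.PosDef)
    (hGSg : (G * Sg).IsSymm) :
    HasSum (fun l : ℕ => G ^ l * Sg * Gᵀ ^ l) ((1 - G ^ 2)⁻¹ * Sg) ∧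
    (let M : Matrix (Fin d) (Fin d) ℝ := Sg⁻¹ * (1 + G)
     let N : Matrix (Fin d) (Fin d) ℝ := Sg⁻¹ * (1 + G) * G
     M.IsSymm ∧ N.IsSymm ∧
     M - N = Sg⁻¹ * (1 - G ^ 2) ∧
     IsUnit M.det ∧
     M⁻¹ * N = G ∧
     M⁻¹ * (Mᵀ + N) * M⁻¹ᵀ = Sg ∧
     (∀ g : Fin d → ℝ, M⁻¹ *ᵥ (Sg⁻¹ *ᵥ ((1 + G) *ᵥ g)) = g)) := by
  -- basic determinant facts
  have hdet1 : (1 + G).det ≠ 0 := by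
    have h := ar1_aux_det G hG (-1) (by norm_num)
    have e : (-1 : ℝ) • (1 : Matrix (Fin d) (Fin d) ℝ) - G = -(1 + G) := by
      rw [neg_smul, one_smul, neg_add, sub_eq_add_neg]
    rw [e, Matrix.det_neg] at h
    intro h1
    exact h (by rw [h1, mul_zero])
  have hdet2 : (1 - G).det ≠ 0 := by
    have h := ar1_aux_det G hG 1 (by norm_num)
    rwa [one_smul] at h
  have hdetU1 : IsUnit (1 + G).det := isUnit_iff_ne_zero.mpr hdet1
  have hdetSg : IsUnit Sg.det := isUnit_iff_ne_zero.mpr hSg.det_pos.ne'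
  have hSgSymm : Sgᵀ = Sg := by
    have := hSg.1.eq
    rwa [Matrix.conjTranspose_eq_transpose_of_trivial] at this
  have hcomm : Sg * Gᵀ = G * Sg := by
    have h := hGSg
    rw [Matrix.IsSymm, Matrix.transpose_mul, hSgSymm] at h
    exact h
  have hSS : Sg * Sg⁻¹ = 1 := Matrix.mul_nonsing_inv Sg hdetSg
  have hSS' : Sg⁻¹ * Sg = 1 := Matrix.nonsing_inv_mul Sg hdetSg
  have hcommInv : Sg⁻¹ * G = Gᵀ * Sg⁻¹ := by
    calc Sg⁻¹ * G = Sg⁻¹ * G * 1 := by rw [mul_one]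
      _ = Sg⁻¹ * G * (Sg * Sg⁻¹) := by rw [hSS]
      _ = Sg⁻¹ * (G * Sg) * Sg⁻¹ := by simp only [mul_assoc]
      _ = Sg⁻¹ * (Sg * Gᵀ) * Sg⁻¹ := by rw [hcomm]
      _ = (Sg⁻¹ * Sg) * (Gᵀ * Sg⁻¹) := by simp only [mul_assoc]
      _ = Gᵀ * Sg⁻¹ := by rw [hSS', one_mul]
  have hSgInvSymm : (Sg⁻¹)ᵀ = Sg⁻¹ := by
    rw [Matrix.transpose_nonsing_inv, hSgSymm]
  -- symmetry of M
  have hMsymm : (Sg⁻¹ * (1 + G))ᵀ = Sg⁻¹ * (1 + G) := by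
    rw [Matrix.transpose_mul, Matrix.transpose_add, Matrix.transpose_one, hSgInvSymm,
      add_mul, one_mul, ← hcommInv, mul_add, mul_one]
  have hNsymm : (Sg⁻¹ * (1 + G) * G)ᵀ = Sg⁻¹ * (1 + G) * G := by
    rw [Matrix.transpose_mul, hMsymm]
    calc Gᵀ * (Sg⁻¹ * (1 + G)) = (Gᵀ * Sg⁻¹) * (1 + G) := by rw [mul_assoc]
      _ = (Sg⁻¹ * G) * (1 + G) := by rw [hcommInv]
      _ = Sg⁻¹ * (G * (1 + G)) := by rw [mul_assoc]
      _ = Sg⁻¹ * ((1 + G) * G) := by rw [show G * (1 + G) = (1 + G) * G by noncomm_ring]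
      _ = Sg⁻¹ * (1 + G) * G := by rw [mul_assoc]
  have hMdet : IsUnit (Sg⁻¹ * (1 + G)).det := by
    rw [Matrix.det_mul]
    exact (Matrix.isUnit_nonsing_inv_det Sg hdetSg).mul hdetU1
  have hMinv : (Sg⁻¹ * (1 + G))⁻¹ = (1 + G)⁻¹ * Sg := by
    rw [Matrix.mul_inv_rev, Matrix.nonsing_inv_nonsing_inv Sg hdetSg]
  -- spectrum of G²
  have hG2 : ∀ μ ∈ spectrum ℂ ((G ^ 2).map (algebraMap ℝ ℂ)), ‖μ‖ < 1 := by
    have hmp : (G ^ 2).map (algebraMap ℝ ℂ) = (G.map (algebraMap ℝ ℂ)) ^ 2 := by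
      rw [← RingHom.mapMatrix_apply, ← RingHom.mapMatrix_apply, ← map_pow]
    intro μ hμ
    rw [hmp, spectrum.map_pow_of_pos _ (by norm_num : 0 < 2)] at hμ
    obtain ⟨ν, hν, rfl⟩ := hμ
    have h := hG ν hν
    have h0 := norm_nonneg ν
    rw [norm_pow]
    nlinarith
  -- the geometric series
  have hgeom := (ar1_aux_geom (G ^ 2) hG2).mul_right Sg
  have hSgT : ∀ l : ℕ, Sg * Gᵀ ^ l = G ^ l * Sg := by
    intro l
    induction l with
    | zero => simp
    | succ n ih =>
      rw [pow_succ, ← mul_assoc, ih, mul_assoc, hcomm, ← mul_assoc, ← pow_succ]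
  have hfun : ∀ l : ℕ, G ^ l * Sg * Gᵀ ^ l = (G ^ 2) ^ l * Sg := by
    intro l
    rw [mul_assoc, hSgT, ← mul_assoc, ← pow_add, ← two_mul, ← pow_mul]
  have hsum : HasSum (fun l : ℕ => G ^ l * Sg * Gᵀ ^ l) ((1 - G ^ 2)⁻¹ * Sg) := by
    rw [show (fun l : ℕ => G ^ l * Sg * Gᵀ ^ l) = fun l : ℕ => (G ^ 2) ^ l * Sg from
      funext fun l => hfun l]
    exact hgeom
  refine ⟨hsum, ?_⟩
  intro M N
  refine ⟨hMsymm, hNsymm, ?_, hMdet, ?_, ?_, ?_⟩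
  · show Sg⁻¹ * (1 + G) - Sg⁻¹ * (1 + G) * G = Sg⁻¹ * (1 - G ^ 2)
    noncomm_ring
  · show (Sg⁻¹ * (1 + G))⁻¹ * (Sg⁻¹ * (1 + G) * G) = G
    rw [hMinv]
    calc (1 + G)⁻¹ * Sg * (Sg⁻¹ * (1 + G) * G)
        = (1 + G)⁻¹ * (Sg * Sg⁻¹) * ((1 + G) * G) := by simp only [mul_assoc]
      _ = G := by
          rw [hSS, mul_one, ← mul_assoc, Matrix.nonsing_inv_mul _ hdetU1, one_mul]
  · show M⁻¹ * (Mᵀ + N) * M⁻¹ᵀ = Sg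
    have hMt : Mᵀ = M := hMsymm
    have hMit : M⁻¹ᵀ = M⁻¹ := by
      rw [Matrix.transpose_nonsing_inv, hMt]
    rw [hMt, hMit]
    have hMN : M + N = M * (1 + G) := by
      show Sg⁻¹ * (1 + G) + Sg⁻¹ * (1 + G) * G = Sg⁻¹ * (1 + G) * (1 + G)
      noncomm_ring
    calc M⁻¹ * (M + N) * M⁻¹ = M⁻¹ * (M * (1 + G)) * M⁻¹ := by rw [hMN]
      _ = (M⁻¹ * M) * ((1 + G) * M⁻¹) := by simp only [mul_assoc]
      _ = (1 + G) * M⁻¹ := by rw [Matrix.nonsing_inv_mul _ hMdet, one_mul]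
      _ = (1 + G) * ((1 + G)⁻¹ * Sg) := by rw [hMinv]
      _ = Sg := by rw [← mul_assoc, Matrix.mul_nonsing_inv _ hdetU1, one_mul]
  · intro g
    rw [Matrix.mulVec_mulVec, Matrix.mulVec_mulVec]
    show ((Sg⁻¹ * (1 + G))⁻¹ * Sg⁻¹ * (1 + G)) *ᵥ g = g
    rw [mul_assoc, show Sg⁻¹ * (1 + G) = M from rfl,
      Matrix.nonsing_inv_mul _ hMdet, Matrix.one_mulVec]
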